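/- Let β > 0 and B > 0, and consider the rescaled equation â''(t) - (1/t) â'(t) = (β²/B) f̂(t)² (â(t) - 1) on [0,1] with â(t) ~ t² as t → 0, where 0 ≤ f̂ ≤ 1. In the limit B → ∞ the equation becomes â'' - (1/t) â' = 0 with â(t) ~ t², whose unique solution is â(t) = t². Consequently, for B sufficiently large, the solution ã(B, ·) of ã'' - (1/r)ã' + β² f²(1-ã) = 0, ã(r) ~ B r², reaches the value 1 at some finite r with positive derivative. -/

import Mathlib

open Filter Set

set_option maxHeartbeats 1000000

/-- For `B` sufficiently large, the solution `ã(B,·)` of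
`ã'' - (1/r) ã' + β² f² (1-ã) = 0` with `ã(r) ~ B r²` near `0` reaches the
value `1` at some finite `r` with positive derivative (the shooting set `B⁺`
is nonempty). -/
theorem stmt18 (β M₁ : ℝ) (hβ : β > 0) (hM₁ : M₁ > 0) (f : ℝ → ℝ)
    (hf : ContinuousOn f (Ici 0)) (hfmono : MonotoneOn f (Ici 0))
    (hf01 : ∀ r ∈ Ici (0:ℝ), 0 ≤ f r ∧ f r ≤ 1)
    (hfbd : ∀ r ∈ Icc (0:ℝ) 1, f r ≤ M₁ * r) :
    ∃ B₀ > (0:ℝ), ∀ B ≥ B₀, ∀ a : ℝ → ℝ,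
      ContinuousOn a (Ici 0) → ContDiffOn ℝ 2 a (Ioi 0) → a 0 = 0 →
      (∀ r ∈ Ioi (0:ℝ),
        deriv (deriv a) r - (1 / r) * deriv a r + β ^ 2 * (f r) ^ 2 * (1 - a r) = 0) →
      Tendsto (fun r => a r / r ^ 2) (nhdsWithin 0 (Ioi 0)) (nhds B) →
      ∃ r₀ > (0:ℝ), a r₀ = 1 ∧ 0 < deriv a r₀ := by
  refine ⟨β ^ 2 * M₁ ^ 2 + 4, by positivity, ?_⟩
  intro B hB a hacont hC2 ha0 hODE hlim
  have hBM : β ^ 2 * M₁ ^ 2 + 4 ≤ B := hB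
  have hB4 : (4:ℝ) ≤ B := by nlinarith [mul_nonneg (sq_nonneg β) (sq_nonneg M₁)]
  have hBpos : (0:ℝ) < B := by linarith
  -- differentiability facts
  have hopen : IsOpen (Ioi (0:ℝ)) := isOpen_Ioi
  have hda : ∀ {s : ℝ}, 0 < s → DifferentiableAt ℝ a s := fun {s} hs =>
    ((hC2.differentiableOn (by norm_num)) s hs).differentiableAt (hopen.mem_nhds hs)
  have hC1 : ContDiffOn ℝ 1 (deriv a) (Ioi 0) :=
    hC2.deriv_of_isOpen hopen (by norm_num)
  have hda' : ∀ {s : ℝ}, 0 < s → DifferentiableAt ℝ (deriv a) s := fun {s} hs =>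
    ((hC1.differentiableOn (by norm_num)) s hs).differentiableAt (hopen.mem_nhds hs)
  -- derivative of G = deriv a / id
  have hGd : ∀ {s : ℝ}, 0 < s →
      HasDerivAt (fun x => deriv a x / x) (-(β ^ 2 * f s ^ 2 * (1 - a s)) / s) s := by
    intro s hs
    have h3 := ((hda' hs).hasDerivAt).div (hasDerivAt_id s) (ne_of_gt hs)
    have hd : deriv (deriv a) s = (1 / s) * deriv a s - β ^ 2 * f s ^ 2 * (1 - a s) := by
      have := hODE s hs; linarith
    have hval : (deriv (deriv a) s * id s - deriv a s * 1) / id s ^ 2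
        = -(β ^ 2 * f s ^ 2 * (1 - a s)) / s := by
      simp only [id]
      rw [hd]
      field_simp
      ring
    rwa [hval] at h3
  -- key estimate : on intervals where 0 ≤ a ≤ 1, G decreases by at most β²M₁²/2
  have key : ∀ ξ t : ℝ, 0 < ξ → ξ ≤ t → t ≤ 1 →
      (∀ s ∈ Ioo ξ t, 0 ≤ a s ∧ a s ≤ 1) →
      ∀ s ∈ Icc ξ t, deriv a ξ / ξ - β ^ 2 * M₁ ^ 2 / 2 ≤ deriv a s / s := by
    intro ξ t hξ hξt ht1 hbound s hs
    set H : ℝ → ℝ := fun x => deriv a x / x + β ^ 2 * M₁ ^ 2 / 2 * x ^ 2 with hHdef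
    have hHd : ∀ {x : ℝ}, 0 < x → HasDerivAt H
        (-(β ^ 2 * f x ^ 2 * (1 - a x)) / x + β ^ 2 * M₁ ^ 2 / 2 * (↑2 * x ^ 1)) x := by
      intro x hx
      exact (hGd hx).add ((hasDerivAt_pow 2 x).const_mul _)
    have hmono : MonotoneOn H (Icc ξ t) := by
      apply monotoneOn_of_deriv_nonneg (convex_Icc ξ t)
      · intro x hx
        exact (hHd (lt_of_lt_of_le hξ hx.1)).continuousAt.continuousWithinAt
      · intro x hx
        rw [interior_Icc] at hx
        exact ((hHd (lt_trans hξ hx.1)).differentiableAt).differentiableWithinAt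
      · intro x hx
        rw [interior_Icc] at hx
        have hx0 : 0 < x := lt_trans hξ hx.1
        rw [(hHd hx0).deriv]
        have hx1 : x ≤ 1 := le_trans hx.2.le ht1
        have hfx := hf01 x (le_of_lt hx0)
        have hfbx := hfbd x ⟨hx0.le, hx1⟩
        have hax := hbound x hx
        have hnum : β ^ 2 * f x ^ 2 * (1 - a x) ≤ β ^ 2 * M₁ ^ 2 * x ^ 2 := by
          have hf2 : f x ^ 2 ≤ M₁ ^ 2 * x ^ 2 := by nlinarith [hfx.1]
          have hfa : f x ^ 2 * (1 - a x) ≤ f x ^ 2 := by nlinarith [sq_nonneg (f x)]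
          have hb2 : (0:ℝ) ≤ β ^ 2 := sq_nonneg β
          nlinarith [mul_le_mul_of_nonneg_left (le_trans hfa hf2) hb2]
        have h1 : 0 ≤ (β ^ 2 * M₁ ^ 2 * x ^ 2 - β ^ 2 * f x ^ 2 * (1 - a x)) / x :=
          div_nonneg (by linarith) hx0.le
        have heq : (β ^ 2 * M₁ ^ 2 * x ^ 2 - β ^ 2 * f x ^ 2 * (1 - a x)) / x
            = -(β ^ 2 * f x ^ 2 * (1 - a x)) / x + β ^ 2 * M₁ ^ 2 / 2 * (↑2 * x ^ 1) := by
          field_simp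
          ring
        linarith [heq ▸ h1]
    have := hmono (left_mem_Icc.2 hξt) hs hs.1
    have hs1 : s ≤ 1 := le_trans hs.2 ht1
    have hs0 : 0 < s := lt_of_lt_of_le hξ hs.1
    simp only [hHdef] at this
    have hc : (0:ℝ) ≤ β ^ 2 * M₁ ^ 2 / 2 := by positivity
    have hs2 : s ^ 2 ≤ 1 := by nlinarith
    have h1 : β ^ 2 * M₁ ^ 2 / 2 * s ^ 2 ≤ β ^ 2 * M₁ ^ 2 / 2 := by nlinarith
    have h2 : 0 ≤ β ^ 2 * M₁ ^ 2 / 2 * ξ ^ 2 := mul_nonneg hc (sq_nonneg ξ)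
    linarith
  -- a is increasing where deriv a > 0
  have amono : ∀ ξ t : ℝ, 0 ≤ ξ → ξ < t → (∀ s ∈ Ioo ξ t, 0 < deriv a s) →
      a ξ < a t := by
    intro ξ t hξ hξt hpos
    have hsm : StrictMonoOn a (Icc ξ t) := by
      apply strictMonoOn_of_deriv_pos (convex_Icc ξ t)
      · exact hacont.mono (fun x hx => le_trans hξ hx.1)
      · intro x hx
        rw [interior_Icc] at hx
        exact hpos x hx
    exact hsm (left_mem_Icc.2 hξt.le) (right_mem_Icc.2 hξt.le) hξt
  -- get δ' from the limit
  have hmem : Ioo (3 * B / 4) (3 * B / 2) ∈ nhds B := Ioo_mem_nhds (by linarith) (by linarith)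
  have hev := hlim hmem
  rw [mem_map, mem_nhdsGT_iff_exists_Ioo_subset] at hev
  obtain ⟨u, hu, hsub⟩ := hev
  set δ : ℝ := min u (min (1 / 2) (1 / B)) with hδdef
  have hδpos : 0 < δ := by
    apply lt_min hu
    apply lt_min (by norm_num) (by positivity)
  have hδhalf : δ ≤ 1 / 2 := le_trans (min_le_right _ _) (min_le_left _ _)
  have hδB : δ ≤ 1 / B := le_trans (min_le_right _ _) (min_le_right _ _)
  have hδu : δ ≤ u := min_le_left _ _
  -- estimates on (0, δ)
  have hest : ∀ s : ℝ, 0 < s → s < δ → 3 * B / 4 * s ^ 2 < a s ∧ a s < 3 * B / 2 * s ^ 2 := by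
    intro s hs hsδ
    have : s ∈ Ioo 0 u := ⟨hs, lt_of_lt_of_le hsδ hδu⟩
    have hmem := hsub this
    simp only [mem_preimage, mem_Ioo] at hmem
    have hs2 : (0:ℝ) < s ^ 2 := by positivity
    constructor
    · have := hmem.1; rw [lt_div_iff₀ hs2] at this; linarith
    · have := hmem.2; rw [div_lt_iff₀ hs2] at this; linarith
  have hapos : ∀ s : ℝ, 0 < s → s < δ → 0 < a s := by
    intro s hs hsδ
    have := (hest s hs hsδ).1
    nlinarith
  have halt : ∀ s : ℝ, 0 < s → s < δ → a s < 1 := by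
    intro s hs hsδ
    have h2 := (hest s hs hsδ).2
    have hsB : s * B < 1 := (lt_div_iff₀ hBpos).1 (lt_of_lt_of_le hsδ hδB)
    have hsb2 : s ≤ 1 / 2 := le_of_lt (lt_of_lt_of_le hsδ hδhalf)
    nlinarith [mul_lt_mul_of_pos_left hsB hs]
  -- Cauchy MVT to find ξ with big G ξ
  set r : ℝ := δ / 2 with hrdef
  have hrpos : 0 < r := by positivity
  have hrδ : r < δ := by rw [hrdef]; linarith
  obtain ⟨ξ, hξmem, hξeq⟩ :=
    exists_ratio_hasDerivAt_eq_ratio_slope a (deriv a) hrpos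
      (hacont.mono Icc_subset_Ici_self)
      (fun x hx => (hda hx.1).hasDerivAt)
      (fun x => x ^ 2) (fun x => 2 * x)
      ((continuous_pow 2).continuousOn)
      (fun x hx => by simpa using hasDerivAt_pow 2 x)
  -- hξeq : (r^2 - 0^2) * deriv a ξ = (a r - a 0) * (2 * ξ)
  have hξpos : 0 < ξ := hξmem.1
  have hξr : ξ < r := hξmem.2
  have hξδ : ξ < δ := lt_trans hξr hrδ
  have hξhalf : ξ ≤ 1 / 2 := le_of_lt (lt_of_lt_of_le hξδ hδhalf)
  have hGξ : 3 * B / 2 ≤ deriv a ξ / ξ := by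
    have har := (hest r hrpos hrδ).1
    have hr2 : (0:ℝ) < r ^ 2 := by positivity
    have hξeq' : r ^ 2 * deriv a ξ = a r * (2 * ξ) := by simpa [ha0] using hξeq
    rw [le_div_iff₀ hξpos]
    nlinarith [hξeq', mul_lt_mul_of_pos_left har hξpos, hr2]
  have haξpos : 0 < a ξ := hapos ξ hξpos hξδ
  -- the estimate G ≥ B + 2 on good intervals starting at ξ
  have keyB : ∀ t : ℝ, ξ ≤ t → t ≤ 1 → (∀ s ∈ Ioo ξ t, 0 ≤ a s ∧ a s ≤ 1) →
      ∀ s ∈ Icc ξ t, B + 2 ≤ deriv a s / s := by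
    intro t hξt ht1 hbound s hs
    have := key ξ t hξpos hξt ht1 hbound s hs
    have : deriv a ξ / ξ - β ^ 2 * M₁ ^ 2 / 2 ≤ deriv a s / s := this
    have hbm : β ^ 2 * M₁ ^ 2 ≤ B - 4 := by linarith
    linarith
  -- the "no zero of a below a point t" argument
  have noZero : ∀ t : ℝ, δ ≤ t → t ≤ 1 → (∀ s, 0 ≤ s → s ≤ t → a s ≤ 1) →
      ∀ s, 0 < s → s ≤ t → 0 < a s := by
    intro t hδt ht1 hle
    by_contra hcon
    push_neg at hcon
    obtain ⟨w, hw0, hwt, hwneg⟩ := hcon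
    -- w ≥ δ since a > 0 on (0, δ)
    have hwδ : δ ≤ w := by
      by_contra h
      push_neg at h
      exact absurd (hapos w hw0 h) (not_lt.2 hwneg)
    -- first such point
    set Z : Set ℝ := {s | s ∈ Icc δ t ∧ a s ≤ 0} with hZdef
    have hZne : Z.Nonempty := ⟨w, ⟨hwδ, hwt⟩, hwneg⟩
    have hZclosed : IsClosed Z := by
      have : Z = Icc δ t ∩ a ⁻¹' (Iic 0) := by ext x; simp [hZdef, and_comm]
      rw [this]
      exact ContinuousOn.preimage_isClosed_of_isClosed
        (hacont.mono (fun x hx => le_trans hδpos.le hx.1)) isClosed_Icc isClosed_Iic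
    have hZbdd : BddBelow Z := ⟨δ, fun x hx => hx.1.1⟩
    set z : ℝ := sInf Z with hzdef
    have hzZ : z ∈ Z := hZclosed.csInf_mem hZne hZbdd
    have hzδ : δ ≤ z := hzZ.1.1
    have hzt : z ≤ t := hzZ.1.2
    have hzneg : a z ≤ 0 := hzZ.2
    have hzpos : 0 < z := lt_of_lt_of_le hδpos hzδ
    -- a > 0 on (0, z)
    have hpos : ∀ s, 0 < s → s < z → 0 < a s := by
      intro s hs hsz
      rcases lt_or_ge s δ with h | h
      · exact hapos s hs h
      · by_contra hneg
        push_neg at hneg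
        have : s ∈ Z := ⟨⟨h, le_trans hsz.le hzt⟩, hneg⟩
        exact absurd (csInf_le hZbdd this) (not_le.2 hsz)
    -- apply keyB on [ξ, z]
    have hξz : ξ < z := lt_of_lt_of_le hξδ hzδ
    have hz1 : z ≤ 1 := le_trans hzt ht1
    have hbound : ∀ s ∈ Ioo ξ z, 0 ≤ a s ∧ a s ≤ 1 := by
      intro s hs
      exact ⟨(hpos s (lt_trans hξpos hs.1) hs.2).le,
        hle s (lt_trans hξpos hs.1).le (le_trans hs.2.le hzt)⟩
    have hGpos := keyB z hξz.le hz1 hbound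
    have hdpos : ∀ s ∈ Ioo ξ z, 0 < deriv a s := by
      intro s hs
      have hs0 : 0 < s := lt_trans hξpos hs.1
      have := hGpos s ⟨hs.1.le, hs.2.le⟩
      have : 0 < deriv a s / s := lt_of_lt_of_le (by linarith) this
      exact (div_pos_iff.1 this).resolve_right (fun h => absurd h.2 (not_lt.2 hs0.le)) |>.1
    have := amono ξ z hξpos.le hξz hdpos
    linarith
  -- main dichotomy
  set S : Set ℝ := {s | s ∈ Icc (0:ℝ) 1 ∧ 1 ≤ a s} with hSdef
  by_cases hS : S.Nonempty
  · -- the solution reaches 1 at r₀ = sInf S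
    have hSclosed : IsClosed S := by
      have : S = Icc (0:ℝ) 1 ∩ a ⁻¹' (Ici 1) := by ext x; simp [hSdef, and_comm]
      rw [this]
      exact ContinuousOn.preimage_isClosed_of_isClosed
        (hacont.mono Icc_subset_Ici_self) isClosed_Icc isClosed_Ici
    have hSbdd : BddBelow S := ⟨0, fun x hx => hx.1.1⟩
    set r₀ : ℝ := sInf S with hr₀def
    have hr₀S : r₀ ∈ S := hSclosed.csInf_mem hS hSbdd
    have hr₀1 : r₀ ≤ 1 := hr₀S.1.2
    have hr₀a : 1 ≤ a r₀ := hr₀S.2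
    have hlt : ∀ s, 0 ≤ s → s < r₀ → a s < 1 := by
      intro s hs hsr
      by_contra h
      push_neg at h
      have : s ∈ S := ⟨⟨hs, le_trans hsr.le hr₀1⟩, h⟩
      exact absurd (csInf_le hSbdd this) (not_le.2 hsr)
    have hr₀δ : δ ≤ r₀ := by
      by_contra h
      push_neg at h
      have hr₀pos : 0 < r₀ := by
        rcases eq_or_lt_of_le hr₀S.1.1 with h0 | h0
        · rw [← h0] at hr₀a; rw [ha0] at hr₀a; linarith
        · exact h0
      exact absurd (halt r₀ hr₀pos h) (not_lt.2 hr₀a)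
    have hr₀pos : 0 < r₀ := lt_of_lt_of_le hδpos hr₀δ
    -- a r₀ = 1 via IVT
    have har₀ : a r₀ = 1 := by
      by_contra h
      have h1 : 1 < a r₀ := lt_of_le_of_ne hr₀a (fun h' => h h'.symm)
      obtain ⟨c, hc, hac⟩ := intermediate_value_Icc hr₀pos.le
        (hacont.mono Icc_subset_Ici_self) (show (1:ℝ) ∈ Icc (a 0) (a r₀) by
          rw [ha0]; exact ⟨by norm_num, h1.le⟩)
      have : c ∈ S := ⟨⟨hc.1, le_trans hc.2 hr₀1⟩, hac.ge⟩
      have hcr₀ := csInf_le hSbdd this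
      have : c = r₀ := le_antisymm hc.2 hcr₀
      rw [this] at hac
      exact h hac
    -- a > 0 on (0, r₀]
    have hzero := noZero r₀ hr₀δ hr₀1 (fun s hs hsr => by
      rcases eq_or_lt_of_le hsr with h | h
      · rw [h, har₀]
      · exact (hlt s hs h).le)
    -- keyB on [ξ, r₀]
    have hξr₀ : ξ < r₀ := lt_of_lt_of_le hξδ hr₀δ
    have hbound : ∀ s ∈ Ioo ξ r₀, 0 ≤ a s ∧ a s ≤ 1 := by
      intro s hs
      have hs0 : 0 < s := lt_trans hξpos hs.1
      exact ⟨(hzero s hs0 hs.2.le).le, (hlt s hs0.le hs.2).le⟩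
    have hG := keyB r₀ hξr₀.le hr₀1 hbound r₀ ⟨hξr₀.le, le_refl _⟩
    have hder : 0 < deriv a r₀ := by
      have : 0 < deriv a r₀ / r₀ := lt_of_lt_of_le (by linarith) hG
      exact (div_pos_iff.1 this).resolve_right
        (fun h => absurd h.2 (not_lt.2 hr₀pos.le)) |>.1
    exact ⟨r₀, hr₀pos, har₀, hder⟩
  · -- impossible: a < 1 on [0,1] forces a 1 > 1
    exfalso
    rw [Set.not_nonempty_iff_eq_empty] at hS
    have hlt : ∀ s, 0 ≤ s → s ≤ 1 → a s < 1 := by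
      intro s hs hs1
      by_contra h
      push_neg at h
      have : s ∈ S := ⟨⟨hs, hs1⟩, h⟩
      rw [hS] at this
      exact this
    have hzero := noZero 1 (by linarith) le_rfl (fun s hs hs1 => (hlt s hs hs1).le)
    have hξ1 : ξ < 1 := by linarith
    have hbound : ∀ s ∈ Ioo ξ (1:ℝ), 0 ≤ a s ∧ a s ≤ 1 := by
      intro s hs
      have hs0 : 0 < s := lt_trans hξpos hs.1
      exact ⟨(hzero s hs0 hs.2.le).le, (hlt s hs0.le hs.2.le).le⟩
    have hG := keyB 1 hξ1.le le_rfl hbound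
    -- ψ = a - 2 x² is monotone on [ξ, 1]
    set ψ : ℝ → ℝ := fun x => a x - 2 * x ^ 2 with hψdef
    have hψd : ∀ {x : ℝ}, 0 < x → HasDerivAt ψ (deriv a x - 2 * (↑2 * x ^ 1)) x := by
      intro x hx
      exact ((hda hx).hasDerivAt).sub ((hasDerivAt_pow 2 x).const_mul 2)
    have hψmono : MonotoneOn ψ (Icc ξ 1) := by
      apply monotoneOn_of_deriv_nonneg (convex_Icc ξ 1)
      · intro x hx
        exact (hψd (lt_of_lt_of_le hξpos hx.1)).continuousAt.continuousWithinAt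
      · intro x hx
        rw [interior_Icc] at hx
        exact ((hψd (lt_trans hξpos hx.1)).differentiableAt).differentiableWithinAt
      · intro x hx
        rw [interior_Icc] at hx
        have hx0 : 0 < x := lt_trans hξpos hx.1
        rw [(hψd hx0).deriv]
        have := hG x ⟨hx.1.le, hx.2.le⟩
        have hd : (B + 2) * x ≤ deriv a x := (le_div_iff₀ hx0).1 this
        nlinarith [mul_nonneg (by linarith : (0:ℝ) ≤ B - 2) hx0.le]
    have := hψmono (left_mem_Icc.2 hξ1.le) (right_mem_Icc.2 hξ1.le) hξ1.le
    simp only [hψdef] at this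
    have ha1 : a 1 < 1 := hlt 1 (by norm_num) le_rfl
    have haξ : 0 < a ξ := hapos ξ hξpos hξδ
    nlinarith
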